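/- arXiv:1405.6379 — 3 statements merged into one kernel-verified Lean document; each statement's English description precedes it below -/
import Mathlib

section
/- Let Φ be an irreducible crystallographic root system of rank 2 (i.e. of type A_2, B_2 or G_2), k a positive integer, and α, β ∈ Φ⁺ distinct with Δ = {α, β}. Set p₋ := H_α^k ∩ H_β^k and p₊ := H_α^{−k} ∩ H_β^{−k}. Then {H_γ^s : γ ∈ Φ⁺, −k ≤ s ≤ k, p₋ ⊆ H_γ^s} = {H_α^k, H_β^k}, and likewise {H_γ^s : γ ∈ Φ⁺, −k ≤ s ≤ k, p₊ ⊆ H_γ^s} = {H_α^{−k}, H_β^{−k}}. -/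
open scoped Classical
open MvPolynomial

noncomputable section

/-- The standard inner (dot) product on Euclidean space `Fin m → ℝ`. -/
def dot {m : ℕ} (x y : Fin m → ℝ) : ℝ := ∑ i, x i * y i

/-- The (central) hyperplane with normal vector `c`. -/
def Hset {m : ℕ} (c : Fin m → ℝ) : Set (Fin m → ℝ) := {v | dot c v = 0}

/-- `Φ` is an irreducible crystallographic (reduced) root system of rank `ℓ` in `ℝ^ℓ`. -/
structure IsIrredCrystRootSystem {ℓ : ℕ} (Φ : Finset (Fin ℓ → ℝ)) : Prop where
  nonzero : ∀ α ∈ Φ, α ≠ 0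
  span_top : Submodule.span ℝ (Φ : Set (Fin ℓ → ℝ)) = ⊤
  reflect_mem : ∀ α ∈ Φ, ∀ β ∈ Φ, β - (2 * dot β α / dot α α) • α ∈ Φ
  crystallographic : ∀ α ∈ Φ, ∀ β ∈ Φ, ∃ n : ℤ, 2 * dot β α / dot α α = (n : ℝ)
  reduced : ∀ α ∈ Φ, ∀ t : ℝ, t • α ∈ Φ → t = 1 ∨ t = -1
  irreducible : ∀ Ψ : Finset (Fin ℓ → ℝ), Ψ ⊆ Φ →
    (∀ α ∈ Ψ, ∀ β ∈ Φ \ Ψ, dot α β = 0) → Ψ = ∅ ∨ Ψ = Φ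

/-- `Δ` (indexed by `Fin ℓ`) is a simple system of the root system `Φ`. -/
structure IsSimpleSystem {ℓ : ℕ} (Φ : Finset (Fin ℓ → ℝ)) (Δ : Fin ℓ → Fin ℓ → ℝ) : Prop where
  mem : ∀ i, Δ i ∈ Φ
  indep : LinearIndependent ℝ Δ
  decomp : ∀ α ∈ Φ, (∃ c : Fin ℓ → ℕ, α = ∑ i, (c i : ℝ) • Δ i) ∨
      (∃ c : Fin ℓ → ℕ, -α = ∑ i, (c i : ℝ) • Δ i)

/-- The positive system `Φ⁺` corresponding to the simple system `Δ`. -/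
def posRoots {ℓ : ℕ} (Φ : Finset (Fin ℓ → ℝ)) (Δ : Fin ℓ → Fin ℓ → ℝ) :
    Finset (Fin ℓ → ℝ) :=
  Φ.filter fun α => ∃ c : Fin ℓ → ℕ, α = ∑ i, (c i : ℝ) • Δ i

/-- `I` is an ideal of the positive system `Φ⁺`: it is closed under going down,
i.e. if `α ∈ I`, `β ∈ Φ⁺` and `α - β` is a nonnegative integer combination of
simple roots, then `β ∈ I`. -/
def IsIdeal {ℓ : ℕ} (Φ : Finset (Fin ℓ → ℝ)) (Δ : Fin ℓ → Fin ℓ → ℝ)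
    (I : Finset (Fin ℓ → ℝ)) : Prop :=
  I ⊆ posRoots Φ Δ ∧
  ∀ α ∈ I, ∀ β ∈ posRoots Φ Δ,
    (∃ c : Fin ℓ → ℕ, α - β = ∑ i, (c i : ℝ) • Δ i) → β ∈ I

/-- `ht` is the height function on `Φ⁺`: `ht (∑ cᵢ αᵢ) = ∑ cᵢ`. -/
def IsHeight {ℓ : ℕ} (Φ : Finset (Fin ℓ → ℝ)) (Δ : Fin ℓ → Fin ℓ → ℝ)
    (ht : (Fin ℓ → ℝ) → ℕ) : Prop :=
  ∀ α ∈ posRoots Φ Δ, ∀ c : Fin ℓ → ℕ, α = ∑ i, (c i : ℝ) • Δ i → ht α = ∑ i, c i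

/-- `h` is the Coxeter number of `Φ`: `h = ht θ + 1` where `θ` is the highest root. -/
def IsCoxeterNumber {ℓ : ℕ} (Φ : Finset (Fin ℓ → ℝ)) (Δ : Fin ℓ → Fin ℓ → ℝ)
    (ht : (Fin ℓ → ℝ) → ℕ) (h : ℕ) : Prop :=
  ∃ θ ∈ posRoots Φ Δ,
    (∀ α ∈ posRoots Φ Δ, ∃ c : Fin ℓ → ℕ, θ - α = ∑ i, (c i : ℝ) • Δ i) ∧ h = ht θ + 1

/-- The embedding `ℝ^ℓ → V = ℝ^{ℓ+1}` (as the first `ℓ` coordinates). -/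
def emb {ℓ : ℕ} (x : Fin ℓ → ℝ) : Fin (ℓ + 1) → ℝ := Fin.snoc x 0

/-- The unit vector `z` in `V = ℝ^{ℓ+1}` orthogonal to `ℝ^ℓ`. -/
def zvec {ℓ : ℕ} : Fin (ℓ + 1) → ℝ := Fin.snoc 0 1

/-- `wht` is the extended height function `w̃ht`:
`w̃ht (α - jz) = -ht α + jh + 1` for `j > 0`, `w̃ht (α - jz) = ht α - jh` for `j ≤ 0`,
and `w̃ht z = 1`. -/
def IsExtHeight {ℓ : ℕ} (Φ : Finset (Fin ℓ → ℝ)) (Δ : Fin ℓ → Fin ℓ → ℝ)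
    (ht : (Fin ℓ → ℝ) → ℕ) (h : ℕ) (wht : (Fin (ℓ + 1) → ℝ) → ℤ) : Prop :=
  (∀ α ∈ posRoots Φ Δ, ∀ j : ℤ, 0 < j →
      wht (emb α - j • zvec) = -(ht α : ℤ) + j * (h : ℤ) + 1) ∧
  (∀ α ∈ posRoots Φ Δ, ∀ j : ℤ, j ≤ 0 →
      wht (emb α - j • zvec) = (ht α : ℤ) - j * (h : ℤ)) ∧
  wht zvec = 1

/-!  Arrangements are recorded by finite sets of normal vectors: the normal
`emb α - j • zvec` corresponds to the hyperplane `H_α^j = {v | (α,v) - j(z,v) = 0}`,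
and `zvec` corresponds to `H_z`.  In all the arrangements considered below distinct
normals define distinct hyperplanes. -/

/-- The cone of the `k`-th extended Shi arrangement :
`{H_α^j : α ∈ Φ⁺, -k+1 ≤ j ≤ k} ∪ {H_z}`. -/
def ShiBase {ℓ : ℕ} (k : ℕ) (P : Finset (Fin ℓ → ℝ)) : Finset (Fin (ℓ + 1) → ℝ) :=
  ((P ×ˢ Finset.Icc (-(k : ℤ) + 1) (k : ℤ)).image fun p => emb p.1 - p.2 • zvec) ∪ {zvec}

/-- `Shi^k_{+T} = {H_α^j : α ∈ Φ⁺, -k+1 ≤ j ≤ k} ∪ {H_z} ∪ {H_α^{-k} : α ∈ T}`. -/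
def ShiPlus {ℓ : ℕ} (k : ℕ) (P T : Finset (Fin ℓ → ℝ)) : Finset (Fin (ℓ + 1) → ℝ) :=
  ShiBase k P ∪ T.image fun α => emb α + (k : ℤ) • zvec

/-- `Shi^k_{-T} = ({H_α^j : α ∈ Φ⁺, -k+1 ≤ j ≤ k} ∪ {H_z}) \ {H_α^k : α ∈ T}`. -/
def ShiMinus {ℓ : ℕ} (k : ℕ) (P T : Finset (Fin ℓ → ℝ)) : Finset (Fin (ℓ + 1) → ℝ) :=
  ShiBase k P \ T.image fun α => emb α - (k : ℤ) • zvec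

/-- The polynomial ring `S = ℝ[x_1, …, x_m]`. -/
abbrev PolyS (m : ℕ) := MvPolynomial (Fin m) ℝ

/-- The defining linear form of the hyperplane with normal vector `c`. -/
def linForm {m : ℕ} (c : Fin m → ℝ) : PolyS m :=
  ∑ i, MvPolynomial.C (c i) * MvPolynomial.X i

/-- The module `D(A, mult)` of logarithmic derivations of the (multi)arrangement whose
hyperplanes have normal vectors `A` with multiplicities `mult`:
`D(A,mult) = {θ : θ(α_H) ∈ S·α_H^{mult H} for all H ∈ A}`.
With `mult = 1` this is the usual module `D(A)`. -/
def DerArr {m : ℕ} (A : Finset (Fin m → ℝ)) (mult : (Fin m → ℝ) → ℕ) :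
    Submodule (PolyS m) (Derivation ℝ (PolyS m) (PolyS m)) where
  carrier := {θ | ∀ c ∈ A, θ (linForm c) ∈ Ideal.span {linForm c ^ mult c}}
  add_mem' := by
    intro a b ha hb c hc
    rw [Derivation.add_apply]
    exact add_mem (ha c hc) (hb c hc)
  zero_mem' := by
    intro c hc
    simp
  smul_mem' := by
    intro p θ hθ c hc
    rw [Derivation.smul_apply, smul_eq_mul]
    exact Ideal.mul_mem_left _ _ (hθ c hc)

/-- A derivation `θ = ∑ fᵢ ∂ᵢ` is homogeneous of (polynomial) degree `d` if each
coefficient `fᵢ = θ(xᵢ)` is homogeneous of degree `d`. -/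
def IsHomogDer {m : ℕ} (θ : Derivation ℝ (PolyS m) (PolyS m)) (d : ℕ) : Prop :=
  ∀ i : Fin m, (θ (MvPolynomial.X i)).IsHomogeneous d

/-- The (multi)arrangement with normals `A` and multiplicity `mult` is free with
exponents `d : Fin m → ℕ` : `D(A,mult)` admits a basis of homogeneous derivations
of degrees `d 0, …, d (m-1)`. -/
def FreeWithExp {m : ℕ} (A : Finset (Fin m → ℝ)) (mult : (Fin m → ℝ) → ℕ)
    (d : Fin m → ℕ) : Prop :=
  ∃ b : Module.Basis (Fin m) (PolyS m) (DerArr A mult),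
    ∀ i, IsHomogDer (b i : Derivation ℝ (PolyS m) (PolyS m)) (d i)

/-- The arrangement with normals `A` (simple multiplicities) is free. -/
def IsFreeArr {m : ℕ} (A : Finset (Fin m → ℝ)) : Prop :=
  ∃ d : Fin m → ℕ, FreeWithExp A (fun _ => 1) d

/-- Freeness with the exponents prescribed as a multiset of integers. -/
def FreeWithExpMultiset {m : ℕ} (A : Finset (Fin m → ℝ)) (mult : (Fin m → ℝ) → ℕ)
    (M : Multiset ℤ) : Prop :=
  ∃ d : Fin m → ℕ, FreeWithExp A mult d ∧
    Multiset.map (fun i => (d i : ℤ)) Finset.univ.val = M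

/-- `d` is the dual partition of the pair `(T, f)` :
for every `i ≥ 1`, `#{j : d j ≥ i} = #(f⁻¹(i) ∩ T)`. -/
def IsDualPartitionOf {m : ℕ} {V : Type*} (d : Fin m → ℕ) (T : Finset V) (f : V → ℤ) :
    Prop :=
  ∀ i : ℕ, 1 ≤ i →
    (Finset.univ.filter fun j => i ≤ d j).card = (T.filter fun v => f v = (i : ℤ)).card


lemma dot_sub_zsmul (γ : Fin 2 → ℝ) (s : ℤ) (v : Fin 3 → ℝ) :
    dot (emb γ - s • zvec) v = γ 0 * v 0 + γ 1 * v 1 - (s : ℝ) * v 2 := by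
  simp [dot, emb, zvec, Fin.sum_univ_three, Fin.snoc, zsmul_eq_mul, Fin.castPred, Fin.castLT]
  ring

lemma dot_add_zsmul (γ : Fin 2 → ℝ) (s : ℤ) (v : Fin 3 → ℝ) :
    dot (emb γ + s • zvec) v = γ 0 * v 0 + γ 1 * v 1 + (s : ℝ) * v 2 := by
  simp [dot, emb, zvec, Fin.sum_univ_three, Fin.snoc, zsmul_eq_mul, Fin.castPred, Fin.castLT]

lemma exists_dual (Δ : Fin 2 → Fin 2 → ℝ) (hind : LinearIndependent ℝ Δ) (K : ℝ) :
    ∃ w : Fin 2 → ℝ, dot (Δ 0) w = K ∧ dot (Δ 1) w = K := by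
  have key := Fintype.linearIndependent_iff.mp hind
  have hdet : Δ 0 0 * Δ 1 1 - Δ 0 1 * Δ 1 0 ≠ 0 := by
    intro h
    have h1 := key ![Δ 1 1, -(Δ 0 1)] (by
      funext x
      fin_cases x <;> simp [Fin.sum_univ_two] <;> nlinarith [h])
    have hd0 : Δ 1 1 = 0 := by simpa using h1 0
    have hb0 : Δ 0 1 = 0 := by simpa using h1 1
    have h2 := key ![Δ 1 0, -(Δ 0 0)] (by
      funext x
      fin_cases x <;> simp [Fin.sum_univ_two, hb0, hd0] <;> nlinarith [h])
    have hc0 : Δ 1 0 = 0 := by simpa using h2 0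
    have ha0 : Δ 0 0 = 0 := by simpa using h2 1
    exact hind.ne_zero 0 (by funext x; fin_cases x <;> simp [ha0, hb0])
  refine ⟨![K * (Δ 1 1 - Δ 0 1) / (Δ 0 0 * Δ 1 1 - Δ 0 1 * Δ 1 0),
           K * (Δ 0 0 - Δ 1 0) / (Δ 0 0 * Δ 1 1 - Δ 0 1 * Δ 1 0)], ?_, ?_⟩ <;>
    simp only [dot, Fin.sum_univ_two, Matrix.cons_val_zero, Matrix.cons_val_one,
      Matrix.head_cons] <;>
    simp only [mul_div_assoc'] <;> rw [← add_div, div_eq_iff hdet] <;> ring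

/-- **Lemma (Statement 7).** In rank `2`, if `Δ = {α, β}` then among the hyperplanes
`H_γ^s` (`γ ∈ Φ⁺`, `-k ≤ s ≤ k`) the only ones containing `p₋ = H_α^k ∩ H_β^k` are
`H_α^k` and `H_β^k`; likewise for `p₊ = H_α^{-k} ∩ H_β^{-k}`. -/
theorem rank_two_intersection_simple (Φ : Finset (Fin 2 → ℝ)) (Δ : Fin 2 → Fin 2 → ℝ)
    (hΦ : IsIrredCrystRootSystem Φ) (hΔ : IsSimpleSystem Φ Δ)
    (k : ℕ) (hk : 0 < k)
    (α β : Fin 2 → ℝ) (hα : α ∈ posRoots Φ Δ) (hβ : β ∈ posRoots Φ Δ) (hne : α ≠ β)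
    (hΔαβ : ({α, β} : Set (Fin 2 → ℝ)) = Set.range Δ) :
    ({H | ∃ γ ∈ posRoots Φ Δ, ∃ s : ℤ, -(k : ℤ) ≤ s ∧ s ≤ (k : ℤ) ∧
          H = Hset (emb γ - s • zvec) ∧
          Hset (emb α - (k : ℤ) • zvec) ∩ Hset (emb β - (k : ℤ) • zvec) ⊆ H} :
        Set (Set (Fin 3 → ℝ)))
      = {Hset (emb α - (k : ℤ) • zvec), Hset (emb β - (k : ℤ) • zvec)} ∧
    ({H | ∃ γ ∈ posRoots Φ Δ, ∃ s : ℤ, -(k : ℤ) ≤ s ∧ s ≤ (k : ℤ) ∧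
          H = Hset (emb γ - s • zvec) ∧
          Hset (emb α + (k : ℤ) • zvec) ∩ Hset (emb β + (k : ℤ) • zvec) ⊆ H} :
        Set (Set (Fin 3 → ℝ)))
      = {Hset (emb α + (k : ℤ) • zvec), Hset (emb β + (k : ℤ) • zvec)} := by
  obtain ⟨w, hw0, hw1⟩ := exists_dual Δ hΔ.indep (k : ℝ)
  have hmemrange : ∀ i, Δ i = α ∨ Δ i = β := by
    intro i
    have : Δ i ∈ ({α, β} : Set (Fin 2 → ℝ)) := hΔαβ ▸ ⟨i, rfl⟩
    simpa using this
  have e0 : Δ 0 0 * w 0 + Δ 0 1 * w 1 = (k : ℝ) := by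
    simpa [dot, Fin.sum_univ_two] using hw0
  have e1 : Δ 1 0 * w 0 + Δ 1 1 * w 1 = (k : ℝ) := by
    simpa [dot, Fin.sum_univ_two] using hw1
  have hdotΔ : ∀ i : Fin 2, Δ i 0 * w 0 + Δ i 1 * w 1 = (k : ℝ) := by
    intro i; fin_cases i; exacts [e0, e1]
  obtain ⟨ia, hia⟩ : α ∈ Set.range Δ := hΔαβ ▸ (by left; rfl)
  obtain ⟨ib, hib⟩ : β ∈ Set.range Δ := hΔαβ ▸ (by right; rfl)
  have hα0 : α 0 * w 0 + α 1 * w 1 = (k : ℝ) := hia ▸ hdotΔ ia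
  have hβ0 : β 0 * w 0 + β 1 * w 1 = (k : ℝ) := hib ▸ hdotΔ ib
  have hdecomp : ∀ γ ∈ posRoots Φ Δ, ∃ n : ℕ, 1 ≤ n ∧
      γ 0 * w 0 + γ 1 * w 1 = (n : ℝ) * k ∧ (n = 1 → γ = α ∨ γ = β) := by
    intro γ hγ
    obtain ⟨hγΦ, c, hc⟩ := Finset.mem_filter.mp hγ
    have hc0 : γ 0 = (c 0 : ℝ) * Δ 0 0 + (c 1 : ℝ) * Δ 1 0 := by
      rw [hc]; simp [Fin.sum_univ_two]
    have hc1 : γ 1 = (c 0 : ℝ) * Δ 0 1 + (c 1 : ℝ) * Δ 1 1 := by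
      rw [hc]; simp [Fin.sum_univ_two]
    refine ⟨c 0 + c 1, ?_, ?_, ?_⟩
    · by_contra hcon
      have h0 : c 0 = 0 := by omega
      have h1 : c 1 = 0 := by omega
      apply hΦ.nonzero γ hγΦ
      funext x; fin_cases x
      · simpa [h0, h1] using hc0
      · simpa [h0, h1] using hc1
    · push_cast
      linear_combination w 0 * hc0 + w 1 * hc1 + (c 0 : ℝ) * e0 + (c 1 : ℝ) * e1
    · intro hn1
      rcases (by omega : (c 0 = 1 ∧ c 1 = 0) ∨ (c 0 = 0 ∧ c 1 = 1)) with ⟨h0, h1⟩ | ⟨h0, h1⟩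
      · have hγΔ : γ = Δ 0 := by rw [hc]; simp [Fin.sum_univ_two, h0, h1]
        rw [hγΔ]; exact hmemrange 0
      · have hγΔ : γ = Δ 1 := by rw [hc]; simp [Fin.sum_univ_two, h0, h1]
        rw [hγΔ]; exact hmemrange 1
  have hkz : (1 : ℤ) ≤ (k : ℤ) := by exact_mod_cast hk
  constructor
  · ext H
    simp only [Set.mem_setOf_eq, Set.mem_insert_iff, Set.mem_singleton_iff]
    constructor
    · rintro ⟨γ, hγ, s, hs1, hs2, rfl, hsub⟩
      obtain ⟨n, hn1, hnw, hn⟩ := hdecomp γ hγ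
      have hP : (![w 0, w 1, 1] : Fin 3 → ℝ) ∈
          Hset (emb α - (k : ℤ) • zvec) ∩ Hset (emb β - (k : ℤ) • zvec) := by
        constructor <;>
        · show dot _ _ = 0
          rw [dot_sub_zsmul]
          simp only [Matrix.cons_val_zero, Matrix.cons_val_one, Matrix.head_cons,
            Matrix.cons_val_two, Matrix.tail_cons]
          push_cast
          linarith [hα0, hβ0]
      have hPH := hsub hP
      simp only [Hset, Set.mem_setOf_eq, dot_sub_zsmul, Matrix.cons_val_zero,
        Matrix.cons_val_one, Matrix.head_cons, Matrix.cons_val_two, Matrix.tail_cons,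
        mul_one] at hPH
      have hsr : (s : ℝ) = (n : ℝ) * (k : ℝ) := by linarith
      have hsz : s = (n : ℤ) * (k : ℤ) := by exact_mod_cast hsr
      have hnz : (1 : ℤ) ≤ (n : ℤ) := by exact_mod_cast hn1
      have hne1 : n = 1 := by nlinarith [hsz ▸ hs2]
      have hsk : s = (k : ℤ) := by rw [hsz, hne1]; ring
      rcases hn hne1 with h | h <;> [left; right] <;> rw [h, hsk]
    · rintro (rfl | rfl)
      · exact ⟨α, hα, (k : ℤ), by omega, le_refl _, rfl, Set.inter_subset_left⟩
      · exact ⟨β, hβ, (k : ℤ), by omega, le_refl _, rfl, Set.inter_subset_right⟩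
  · have hconv : ∀ γ : Fin 2 → ℝ, Hset (emb γ - (-(k : ℤ)) • zvec) =
        Hset (emb γ + (k : ℤ) • zvec) := by
      intro γ; rw [neg_smul, sub_neg_eq_add]
    ext H
    simp only [Set.mem_setOf_eq, Set.mem_insert_iff, Set.mem_singleton_iff]
    constructor
    · rintro ⟨γ, hγ, s, hs1, hs2, rfl, hsub⟩
      obtain ⟨n, hn1, hnw, hn⟩ := hdecomp γ hγ
      have hP : (![-w 0, -w 1, 1] : Fin 3 → ℝ) ∈
          Hset (emb α + (k : ℤ) • zvec) ∩ Hset (emb β + (k : ℤ) • zvec) := by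
        constructor <;>
        · show dot _ _ = 0
          rw [dot_add_zsmul]
          simp only [Matrix.cons_val_zero, Matrix.cons_val_one, Matrix.head_cons,
            Matrix.cons_val_two, Matrix.tail_cons]
          push_cast
          linarith [hα0, hβ0]
      have hPH := hsub hP
      simp only [Hset, Set.mem_setOf_eq, dot_sub_zsmul, Matrix.cons_val_zero,
        Matrix.cons_val_one, Matrix.head_cons, Matrix.cons_val_two, Matrix.tail_cons,
        mul_one] at hPH
      have hsr : (s : ℝ) = -((n : ℝ) * (k : ℝ)) := by linarith
      have hsz : s = -((n : ℤ) * (k : ℤ)) := by exact_mod_cast hsr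
      have hnz : (1 : ℤ) ≤ (n : ℤ) := by exact_mod_cast hn1
      have hne1 : n = 1 := by nlinarith [hsz ▸ hs1]
      have hsk : s = -(k : ℤ) := by rw [hsz, hne1]; ring
      rcases hn hne1 with h | h <;> [left; right] <;> rw [h, hsk, hconv]
    · rintro (rfl | rfl)
      · exact ⟨α, hα, -(k : ℤ), le_refl _, by omega, (hconv α).symm, Set.inter_subset_left⟩
      · exact ⟨β, hβ, -(k : ℤ), le_refl _, by omega, (hconv β).symm, Set.inter_subset_right⟩


end
end

section
/- Let Φ be an irreducible crystallographic root system of rank 2 (i.e. of type A_2, B_2 or G_2), k a positive integer, and α, β ∈ Φ⁺ distinct with {α, β} ≠ Δ. Then there exists γ ∈ Φ⁺ such that H_α^k ∩ H_β^k ⊆ H_γ^0, and there exists γ' ∈ Φ⁺ such that H_α^{−k} ∩ H_β^{−k} ⊆ H_{γ'}^0. -/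
open scoped Classical
open MvPolynomial

noncomputable section

lemma dot3 (x y : Fin 3 → ℝ) : dot x y = x 0 * y 0 + x 1 * y 1 + x 2 * y 2 := by
  simp [dot, Fin.sum_univ_three]

lemma emb0 (x : Fin 2 → ℝ) : emb x 0 = x 0 := Fin.snoc_castSucc (α := fun _ => ℝ) 0 x 0
lemma emb1 (x : Fin 2 → ℝ) : emb x 1 = x 1 := Fin.snoc_castSucc (α := fun _ => ℝ) 0 x 1
lemma emb2 (x : Fin 2 → ℝ) : emb x 2 = 0 := Fin.snoc_last (α := fun _ => ℝ) 0 x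
lemma zv0 : (zvec : Fin 3 → ℝ) 0 = 0 := Fin.snoc_castSucc (α := fun _ => ℝ) 1 0 0
lemma zv1 : (zvec : Fin 3 → ℝ) 1 = 0 := Fin.snoc_castSucc (α := fun _ => ℝ) 1 0 1
lemma zv2 : (zvec : Fin 3 → ℝ) 2 = 1 := Fin.snoc_last (α := fun _ => ℝ) 1 0

lemma geom (α β γ : Fin 2 → ℝ) (c : ℝ) (hc : c ≠ 0) (h : α - β = c • γ) (w : Fin 3 → ℝ) :
    Hset (emb α + w) ∩ Hset (emb β + w) ⊆ Hset (emb γ) := by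
  rintro v ⟨h1, h2⟩
  simp only [Hset, Set.mem_setOf_eq, dot3, Pi.add_apply, emb0, emb1, emb2] at h1 h2 ⊢
  have e0 := congrFun h 0
  have e1 := congrFun h 1
  simp only [Pi.sub_apply, Pi.smul_apply, smul_eq_mul] at e0 e1
  have key : c * (γ 0 * v 0 + γ 1 * v 1 + 0 * v 2) = 0 := by
    linear_combination h1 - h2 - v 0 * e0 - v 1 * e1
  exact (mul_eq_zero.mp key).resolve_left hc


lemma dot2 (x y : Fin 2 → ℝ) : dot x y = x 0 * y 0 + x 1 * y 1 := by
  simp [dot, Fin.sum_univ_two]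

lemma dot_comm' {m : ℕ} (x y : Fin m → ℝ) : dot x y = dot y x := by
  simp [dot, mul_comm]

lemma dot_self_pos (x : Fin 2 → ℝ) (hx : x ≠ 0) : 0 < dot x x := by
  have h : x 0 ≠ 0 ∨ x 1 ≠ 0 := by
    by_contra h; push_neg at h
    exact hx (funext fun i => by fin_cases i <;> simp [h.1, h.2])
  rw [dot2]
  rcases h with h | h
  · nlinarith [mul_self_pos.mpr h, mul_self_nonneg (x 1)]
  · nlinarith [mul_self_pos.mpr h, mul_self_nonneg (x 0)]

lemma dva (a b x : Fin 2 → ℝ) (r s : ℝ) :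
    dot (r • a + s • b) x = r * dot a x + s * dot b x := by
  simp only [dot2, Pi.add_apply, Pi.smul_apply, smul_eq_mul]; ring

lemma dvv (a b : Fin 2 → ℝ) (r s r' s' : ℝ) :
    dot (r • a + s • b) (r' • a + s' • b) =
      r * r' * dot a a + (r * s' + s * r') * dot a b + s * s' * dot b b := by
  simp only [dot2, Pi.add_apply, Pi.smul_apply, smul_eq_mul]; ring

lemma dotnl (x y : Fin 2 → ℝ) : dot (-x) y = -dot x y := by
  simp only [dot2, Pi.neg_apply]; ring

lemma dotnr (x y : Fin 2 → ℝ) : dot x (-y) = -dot x y := by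
  simp only [dot2, Pi.neg_apply]; ring

lemma cs2 (x y : Fin 2 → ℝ)
    (hind : ∀ r s : ℝ, r • x + s • y = 0 → r = 0 ∧ s = 0)
    (hx : 0 < dot x x) (hy : 0 < dot y y) :
    (2 * dot y x / dot x x) * (2 * dot x y / dot y y) < 4 := by
  have hdet : x 0 * y 1 - x 1 * y 0 ≠ 0 := by
    intro hd
    have c1 : y 1 • x + (-(x 1)) • y = 0 := by
      funext i; fin_cases i <;>
        simp only [Pi.add_apply, Pi.smul_apply, smul_eq_mul, Pi.zero_apply, Fin.mk_zero,
          Fin.mk_one] <;> nlinarith [hd]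
    have c2 : y 0 • x + (-(x 0)) • y = 0 := by
      funext i; fin_cases i <;>
        simp only [Pi.add_apply, Pi.smul_apply, smul_eq_mul, Pi.zero_apply, Fin.mk_zero,
          Fin.mk_one] <;> nlinarith [hd]
    have h1 := hind _ _ c1
    have h2 := hind _ _ c2
    have hx0 : x = 0 := by
      funext i; fin_cases i <;> simp only [Pi.zero_apply, Fin.mk_zero, Fin.mk_one]
      · nlinarith [h1.2, h2.2]
      · nlinarith [h1.2, h2.2]
    have := hind 1 0 (by rw [hx0]; simp)
    norm_num at this
  have hlt : (dot x y) ^ 2 < dot x x * dot y y := by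
    have hid : dot x x * dot y y - (dot x y)^2 = (x 0 * y 1 - x 1 * y 0)^2 := by
      simp only [dot2]; ring
    nlinarith [pow_pos (abs_pos.mpr hdet) 2, sq_abs (x 0 * y 1 - x 1 * y 0)]
  rw [div_mul_div_comm, div_lt_iff₀ (by positivity)]
  rw [dot_comm' y x]
  nlinarith [hlt]

set_option maxHeartbeats 2000000 in
theorem keyLemma (Φ : Finset (Fin 2 → ℝ)) (a b : Fin 2 → ℝ)
    (hΦnz : ∀ γ ∈ Φ, γ ≠ 0)
    (hrefl : ∀ α ∈ Φ, ∀ β ∈ Φ, β - (2 * dot β α / dot α α) • α ∈ Φ)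
    (hcr : ∀ α ∈ Φ, ∀ β ∈ Φ, ∃ n : ℤ, 2 * dot β α / dot α α = (n : ℝ))
    (hred : ∀ α ∈ Φ, ∀ t : ℝ, t • α ∈ Φ → t = 1 ∨ t = -1)
    (hirr : ∀ Ψ : Finset (Fin 2 → ℝ), Ψ ⊆ Φ →
      (∀ x ∈ Ψ, ∀ y ∈ Φ \ Ψ, dot x y = 0) → Ψ = ∅ ∨ Ψ = Φ)
    (haΦ : a ∈ Φ) (hbΦ : b ∈ Φ)
    (hind : ∀ r s : ℝ, r • a + s • b = 0 → r = 0 ∧ s = 0)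
    (hdec : ∀ γ ∈ Φ, (∃ m n : ℕ, γ = (m : ℝ) • a + (n : ℝ) • b) ∨
      (∃ m n : ℕ, -γ = (m : ℝ) • a + (n : ℝ) • b))
    (hBA : dot b b ≤ dot a a)
    (α β : Fin 2 → ℝ) (hαΦ : α ∈ Φ) (hβΦ : β ∈ Φ)
    (hαr : ∃ m n : ℕ, α = (m : ℝ) • a + (n : ℝ) • b)
    (hβr : ∃ m n : ℕ, β = (m : ℝ) • a + (n : ℝ) • b)
    (hne : α ≠ β)
    (hnotΔ : ¬((α = a ∧ β = b) ∨ (α = b ∧ β = a))) :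
    ∃ γ, (γ ∈ Φ ∧ ∃ m n : ℕ, γ = (m : ℝ) • a + (n : ℝ) • b) ∧
      ∃ c : ℝ, c ≠ 0 ∧ α - β = c • γ := by
  have ha0 : a ≠ 0 := hΦnz a haΦ
  have hb0 : b ≠ 0 := hΦnz b hbΦ
  have hA : 0 < dot a a := dot_self_pos a ha0
  have hB : 0 < dot b b := dot_self_pos b hb0
  -- negation closure
  have hneg : ∀ γ ∈ Φ, -γ ∈ Φ := by
    intro γ hγ
    have hγγ : dot γ γ ≠ 0 := (dot_self_pos γ (hΦnz γ hγ)).ne'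
    have h2 : 2 * dot γ γ / dot γ γ = 2 := by
      field_simp
    have h := hrefl γ hγ γ hγ
    rw [h2] at h
    have e : γ - (2 : ℝ) • γ = -γ := by module
    rwa [e] at h
  -- uniqueness of coefficients
  have uniq : ∀ r s r' s' : ℝ, r • a + s • b = r' • a + s' • b → r = r' ∧ s = s' := by
    intro r s r' s' h
    have h0 : (r - r') • a + (s - s') • b = (r • a + s • b) - (r' • a + s' • b) := by module
    rw [h, sub_self] at h0
    have := hind _ _ h0
    constructor <;> linarith [this.1, this.2]
  -- no roots with mixed-sign coefficients
  have nm1 : ∀ r s : ℝ, r < 0 → 0 < s → r • a + s • b ∈ Φ → False := by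
    intro r s hr hs h
    rcases hdec _ h with ⟨m, n, he⟩ | ⟨m, n, he⟩
    · have := (uniq _ _ _ _ he).1
      have : (0:ℝ) ≤ r := this ▸ Nat.cast_nonneg m
      linarith
    · have he' : (-r) • a + (-s) • b = (m : ℝ) • a + (n : ℝ) • b := by
        rw [← he]; module
      have := (uniq _ _ _ _ he').2
      have : (0:ℝ) ≤ -s := this ▸ Nat.cast_nonneg n
      linarith
  have nm2 : ∀ r s : ℝ, 0 < r → s < 0 → r • a + s • b ∈ Φ → False := by
    intro r s hr hs h
    rcases hdec _ h with ⟨m, n, he⟩ | ⟨m, n, he⟩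
    · have := (uniq _ _ _ _ he).2
      have : (0:ℝ) ≤ s := this ▸ Nat.cast_nonneg n
      linarith
    · have he' : (-r) • a + (-s) • b = (m : ℝ) • a + (n : ℝ) • b := by
        rw [← he]; module
      have := (uniq _ _ _ _ he').1
      have : (0:ℝ) ≤ -r := this ▸ Nat.cast_nonneg m
      linarith
  -- reflection with computed value
  have reflC : ∀ x ∈ Φ, ∀ γ ∈ Φ, ∀ e : ℝ, 2 * dot γ x = e * dot x x → γ - e • x ∈ Φ := by
    intro x hx γ hγ e he
    have hxx : dot x x ≠ 0 := (dot_self_pos x (hΦnz x hx)).ne'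
    have hv : 2 * dot γ x / dot x x = e := by
      field_simp
      linarith [he]
    have := hrefl x hx γ hγ
    rwa [hv] at this
  -- subtracting a root
  have sub_mem : ∀ x ∈ Φ, ∀ γ ∈ Φ, 0 < dot x γ → (∀ t : ℝ, γ ≠ t • x) → γ - x ∈ Φ := by
    intro x hx γ hγ hpos hprop
    have hx0 : x ≠ 0 := hΦnz x hx
    have hxx : 0 < dot x x := dot_self_pos x hx0
    have hγγ : 0 < dot γ γ := dot_self_pos γ (hΦnz γ hγ)
    have hindxγ : ∀ r s : ℝ, r • x + s • γ = 0 → r = 0 ∧ s = 0 := by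
      intro r s h
      by_cases hs : s = 0
      · subst hs
        have h' : r • x = 0 := by simpa using h
        rcases smul_eq_zero.mp h' with h'' | h''
        · exact ⟨h'', rfl⟩
        · exact absurd h'' hx0
      · exfalso
        have h2 : s • γ = (-r) • x := by
          have e : s • γ = (r • x + s • γ) - r • x := by module
          rw [h] at e; rw [e]; module
        have h3 : γ = (-r/s) • x := by
          calc γ = s⁻¹ • (s • γ) := by rw [smul_smul]; field_simp; rw [one_smul]
          _ = s⁻¹ • ((-r) • x) := by rw [h2]
          _ = (-r/s) • x := by rw [smul_smul]; ring_nf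
        exact absurd h3 (hprop _)
    obtain ⟨m1, hm1⟩ := hcr x hx γ hγ
    obtain ⟨m2, hm2⟩ := hcr γ hγ x hx
    have hm1pos : 0 < m1 := by
      have : (0:ℝ) < (m1 : ℝ) := by
        rw [← hm1]
        have : 0 < dot γ x := by rwa [dot_comm' γ x]
        positivity
      exact_mod_cast this
    have hm2pos : 0 < m2 := by
      have : (0:ℝ) < (m2 : ℝ) := by
        rw [← hm2]
        positivity
      exact_mod_cast this
    have hprod : m1 * m2 < 4 := by
      have := cs2 x γ hindxγ hxx hγγ
      rw [hm1, hm2] at this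
      exact_mod_cast this
    have h14 : m1 = 1 ∨ m2 = 1 := by
      by_contra hcon
      push_neg at hcon
      have h1 : 2 ≤ m1 := by omega
      have h2 : 2 ≤ m2 := by omega
      nlinarith
    rcases h14 with h1 | h1
    · have := hrefl x hx γ hγ
      rw [hm1, h1] at this
      simpa using this
    · have := hrefl γ hγ x hx
      rw [hm2, h1] at this
      simp only [Int.cast_one, one_smul] at this
      have h2 := hneg _ this
      have e : -(x - γ) = γ - x := by module
      rwa [e] at h2
  -- descent
  have descent : ∀ γ ∈ Φ, ∀ m n : ℕ, γ = (m:ℝ) • a + (n:ℝ) • b → 2 ≤ m + n →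
      (1 ≤ m ∧ γ - a ∈ Φ) ∨ (1 ≤ n ∧ γ - b ∈ Φ) := by
    intro γ hγ m n hrep hmn
    have hγγ : 0 < dot γ γ := dot_self_pos γ (hΦnz γ hγ)
    have hexp : dot γ γ = (m:ℝ) * dot a γ + (n:ℝ) * dot b γ := by
      have h := dva a b γ (m:ℝ) (n:ℝ)
      rw [← hrep] at h
      exact h
    have hkey : (1 ≤ m ∧ 0 < dot a γ) ∨ (1 ≤ n ∧ 0 < dot b γ) := by
      by_contra hcon
      push_neg at hcon
      obtain ⟨h1, h2⟩ := hcon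
      have t1 : (m:ℝ) * dot a γ ≤ 0 := by
        rcases Nat.eq_zero_or_pos m with hm | hm
        · simp [hm]
        · exact mul_nonpos_of_nonneg_of_nonpos (Nat.cast_nonneg m) (h1 hm)
      have t2 : (n:ℝ) * dot b γ ≤ 0 := by
        rcases Nat.eq_zero_or_pos n with hn | hn
        · simp [hn]
        · exact mul_nonpos_of_nonneg_of_nonpos (Nat.cast_nonneg n) (h2 hn)
      linarith
    rcases hkey with ⟨hm, hd⟩ | ⟨hn, hd⟩
    · refine Or.inl ⟨hm, sub_mem a haΦ γ hγ hd ?_⟩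
      intro t ht
      have h1 : t • a + (0:ℝ) • b = (m:ℝ) • a + (n:ℝ) • b := by
        rw [← hrep, ht]; module
      obtain ⟨he1, he2⟩ := uniq _ _ _ _ h1
      have hn0 : n = 0 := by exact_mod_cast he2.symm
      have hm2 : 2 ≤ m := by omega
      have hγm : ((m:ℝ)) • a ∈ Φ := by
        have : γ = (m:ℝ) • a := by rw [hrep, hn0]; push_cast; module
        rwa [this] at hγ
      rcases hred a haΦ _ hγm with h | h
      · have : m = 1 := by exact_mod_cast h
        omega
      · have : (0:ℝ) ≤ (m:ℝ) := Nat.cast_nonneg m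
        rw [h] at this; norm_num at this
    · refine Or.inr ⟨hn, sub_mem b hbΦ γ hγ hd ?_⟩
      intro t ht
      have h1 : (0:ℝ) • a + t • b = (m:ℝ) • a + (n:ℝ) • b := by
        rw [← hrep, ht]; module
      obtain ⟨he1, he2⟩ := uniq _ _ _ _ h1
      have hm0 : m = 0 := by exact_mod_cast he1.symm
      have hn2 : 2 ≤ n := by omega
      have hγn : ((n:ℝ)) • b ∈ Φ := by
        have : γ = (n:ℝ) • b := by rw [hrep, hm0]; push_cast; module
        rwa [this] at hγ
      rcases hred b hbΦ _ hγn with h | h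
      · have : n = 1 := by exact_mod_cast h
        omega
      · have : (0:ℝ) ≤ (n:ℝ) := Nat.cast_nonneg n
        rw [h] at this; norm_num at this
  -- Cartan integers
  obtain ⟨q, hq⟩ := hcr a haΦ b hbΦ
  obtain ⟨p, hp⟩ := hcr b hbΦ a haΦ
  have hqe : 2 * dot a b = (q:ℝ) * dot a a := by
    rw [div_eq_iff hA.ne'] at hq
    rw [dot_comm' a b]; linarith
  have hpe : 2 * dot a b = (p:ℝ) * dot b b := by
    rw [div_eq_iff hB.ne'] at hp
    linarith
  have hprod : (q:ℝ) * (p:ℝ) < 4 := by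
    have := cs2 a b hind hA hB
    rw [hq, hp] at this
    exact this
  -- simple roots are obtuse
  have hDle : dot a b ≤ 0 := by
    by_contra hD
    push_neg at hD
    have hq1 : 1 ≤ q := by
      have : (0:ℝ) < (q:ℝ) := by nlinarith
      exact_mod_cast this
    have hp1 : 1 ≤ p := by
      have : (0:ℝ) < (p:ℝ) := by nlinarith
      exact_mod_cast this
    have hqp3 : q * p < 4 := by exact_mod_cast hprod
    have h14 : q = 1 ∨ p = 1 := by
      by_contra hcon
      push_neg at hcon
      have h1 : 2 ≤ q := by omega
      have h2 : 2 ≤ p := by omega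
      nlinarith
    rcases h14 with h1 | h1
    · have hval : 2 * dot b a = (1:ℝ) * dot a a := by
        rw [dot_comm' b a]; rw [h1] at hqe; push_cast at hqe; linarith
      have hmem := reflC a haΦ b hbΦ 1 hval
      have e : b - (1:ℝ) • a = (-1:ℝ) • a + (1:ℝ) • b := by module
      rw [e] at hmem
      exact nm1 _ _ (by norm_num) (by norm_num) hmem
    · have hval : 2 * dot a b = (1:ℝ) * dot b b := by
        rw [h1] at hpe; push_cast at hpe; linarith
      have hmem := reflC b hbΦ a haΦ 1 hval
      have e : a - (1:ℝ) • b = (1:ℝ) • a + (-1:ℝ) • b := by module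
      rw [e] at hmem
      exact nm2 _ _ (by norm_num) (by norm_num) hmem
  have hqle : q ≤ 0 := by
    have : (q:ℝ) ≤ 0 := by nlinarith
    exact_mod_cast this
  have hple : p ≤ 0 := by
    have : (p:ℝ) ≤ 0 := by nlinarith
    exact_mod_cast this
  have hq01 : q = 0 ∨ q = -1 := by
    have hAB : 0 < dot a a * dot b b := mul_pos hA hB
    have e1 : (q:ℝ) * (q:ℝ) * (dot a a * dot b b) ≤ (q:ℝ) * (q:ℝ) * (dot a a * dot a a) := by
      have hAB2 : dot a a * dot b b ≤ dot a a * dot a a := by nlinarith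
      exact mul_le_mul_of_nonneg_left hAB2 (mul_self_nonneg _)
    have e2 : (q:ℝ) * (q:ℝ) * (dot a a * dot a a) = 4 * dot a b * dot a b := by
      linear_combination (-(2 * dot a b + (q:ℝ) * dot a a)) * hqe
    have e3 : (q:ℝ) * (p:ℝ) * (dot a a * dot b b) = 4 * dot a b * dot a b := by
      linear_combination (-(p:ℝ) * dot b b) * hqe + (-2 * dot a b) * hpe
    have hqq : (q:ℝ) * (q:ℝ) < 4 := by nlinarith
    have : -2 < q := by
      by_contra hcon
      push_neg at hcon
      have h2 : (q:ℝ) ≤ -2 := by exact_mod_cast hcon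
      nlinarith [sq_nonneg ((q:ℝ) + 2)]
    omega
  rcases hq01 with hq0 | hqm1
  · -- orthogonal case: contradiction with irreducibility
    exfalso
    exfalso
    have hD0 : dot a b = 0 := by
      rw [hq0] at hqe; push_cast at hqe; linarith
    have no2 : ∀ x ∈ Φ, ((2:ℝ) • x ∈ Φ) → False := by
      intro x hx h; rcases hred x hx 2 h with h' | h' <;> norm_num at h'
    have no11 : ∀ γ ∈ Φ, γ = (1:ℝ) • a + (1:ℝ) • b → False := by
      intro γ hγ hrep
      have hda : 2 * dot γ a = (2:ℝ) * dot a a := by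
        rw [hrep, dva, dot_comm' b a]; linarith
      have hmem := reflC a haΦ γ hγ 2 hda
      have e : γ - (2:ℝ) • a = (-1:ℝ) • a + (1:ℝ) • b := by rw [hrep]; module
      rw [e] at hmem
      exact nm1 _ _ (by norm_num) (by norm_num) hmem
    have comp : ∀ N : ℕ, ∀ m n : ℕ, m + n = N → ∀ γ ∈ Φ, γ = (m:ℝ) • a + (n:ℝ) • b →
        (m = 1 ∧ n = 0) ∨ (m = 0 ∧ n = 1) := by
      intro N
      induction N using Nat.strong_induction_on with
      | _ N ih =>
        intro m n hmn γ hγ hrep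
        by_cases hsmall : m + n < 2
        · have h00 : ¬(m = 0 ∧ n = 0) := by
            rintro ⟨rfl, rfl⟩
            apply hΦnz γ hγ
            rw [hrep]; push_cast; simp
          omega
        · push_neg at hsmall
          rcases descent γ hγ m n hrep hsmall with ⟨hm1, hsub⟩ | ⟨hn1, hsub⟩
          · obtain ⟨m', rfl⟩ : ∃ m', m = m' + 1 := ⟨m - 1, by omega⟩
            have hrep' : γ - a = (m':ℝ) • a + (n:ℝ) • b := by rw [hrep]; push_cast; module
            rcases ih (m' + n) (by omega) m' n rfl (γ - a) hsub hrep' with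
              ⟨h1, h2⟩ | ⟨h1, h2⟩ <;> subst h1 <;> subst h2
            · exfalso
              apply no2 a haΦ
              have e : γ = (2:ℝ) • a := by rw [hrep]; push_cast; module
              rwa [e] at hγ
            · exact absurd (by rw [hrep]; push_cast; module) (fun h => no11 γ hγ h)
          · obtain ⟨n', rfl⟩ : ∃ n', n = n' + 1 := ⟨n - 1, by omega⟩
            have hrep' : γ - b = (m:ℝ) • a + (n':ℝ) • b := by rw [hrep]; push_cast; module
            rcases ih (m + n') (by omega) m n' rfl (γ - b) hsub hrep' with
              ⟨h1, h2⟩ | ⟨h1, h2⟩ <;> subst h1 <;> subst h2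
            · exact absurd (by rw [hrep]; push_cast; module) (fun h => no11 γ hγ h)
            · exfalso
              apply no2 b hbΦ
              have e : γ = (2:ℝ) • b := by rw [hrep]; push_cast; module
              rwa [e] at hγ
    have hsub4 : ∀ γ ∈ Φ, γ = a ∨ γ = b ∨ γ = -a ∨ γ = -b := by
      intro γ hγ
      rcases hdec γ hγ with ⟨m, n, hr⟩ | ⟨m, n, hr⟩
      · rcases comp (m + n) m n rfl γ hγ hr with ⟨h1, h2⟩ | ⟨h1, h2⟩ <;> subst h1 <;> subst h2
        · exact Or.inl (by rw [hr]; push_cast; module)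
        · exact Or.inr (Or.inl (by rw [hr]; push_cast; module))
      · have hγ' := hneg γ hγ
        rcases comp (m + n) m n rfl (-γ) hγ' hr with ⟨h1, h2⟩ | ⟨h1, h2⟩ <;>
          subst h1 <;> subst h2
        · refine Or.inr (Or.inr (Or.inl ?_))
          have h' : -γ = a := by rw [hr]; push_cast; module
          rw [← h', neg_neg]
        · refine Or.inr (Or.inr (Or.inr ?_))
          have h' : -γ = b := by rw [hr]; push_cast; module
          rw [← h', neg_neg]
    have hab : a ≠ b := by
      intro h
      have := hind 1 (-1) (by rw [h]; module)
      norm_num at this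
    have hanb : a ≠ -b := by
      intro h
      have := hind 1 1 (by rw [h]; module)
      norm_num at this
    classical
    have hΨsub : ({a, -a} : Finset (Fin 2 → ℝ)) ⊆ Φ := by
      intro x hx
      rcases Finset.mem_insert.mp hx with rfl | hx
      · exact haΦ
      · rw [Finset.mem_singleton] at hx; subst hx; exact hneg a haΦ
    have horth : ∀ x ∈ ({a, -a} : Finset (Fin 2 → ℝ)), ∀ y ∈ Φ \ ({a, -a} : Finset (Fin 2 → ℝ)),
        dot x y = 0 := by
      intro x hx y hy
      obtain ⟨hyΦ, hyΨ⟩ := Finset.mem_sdiff.mp hy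
      have hy4 := hsub4 y hyΦ
      have hyb : y = b ∨ y = -b := by
        rcases hy4 with h | h | h | h
        · exact absurd (h ▸ Finset.mem_insert_self a {-a}) hyΨ
        · exact Or.inl h
        · exfalso
          apply hyΨ
          rw [h]
          exact Finset.mem_insert.mpr (Or.inr (Finset.mem_singleton_self (-a)))
        · exact Or.inr h
      have hx2 : x = a ∨ x = -a := by
        rcases Finset.mem_insert.mp hx with h | h
        · exact Or.inl h
        · exact Or.inr (Finset.mem_singleton.mp h)
      rcases hx2 with rfl | rfl <;> rcases hyb with rfl | rfl <;>
        simp [dotnl, dotnr, hD0]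
    rcases hirr _ hΨsub horth with h | h
    · have := Finset.mem_insert_self a ({-a} : Finset (Fin 2 → ℝ))
      rw [h] at this
      exact absurd this (Finset.notMem_empty a)
    · have hbmem : b ∈ ({a, -a} : Finset (Fin 2 → ℝ)) := by rw [h]; exact hbΦ
      rcases Finset.mem_insert.mp hbmem with h' | h'
      · exact hab h'.symm
      · rw [Finset.mem_singleton] at h'
        apply hanb
        have := congrArg Neg.neg h'
        rw [neg_neg] at this
        exact this.symm
  · -- q = -1
    have hqA : 2 * dot a b = -dot a a := by
      rw [hqm1] at hqe; push_cast at hqe; linarith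
    have hpm : p = -1 ∨ p = -2 ∨ p = -3 := by
      have hpne : p ≠ 0 := by
        intro h0
        rw [h0] at hpe; push_cast at hpe
        nlinarith
      have : -4 < p := by
        have hqp : (q:ℝ) * (p:ℝ) < 4 := hprod
        rw [hqm1] at hqp
        push_cast at hqp
        have : (-4:ℝ) < (p:ℝ) := by nlinarith
        exact_mod_cast this
      omega
    -- u = a + b is always a root when q = -1
    have hu : (1:ℝ) • a + (1:ℝ) • b ∈ Φ := by
      have hval : 2 * dot b a = (-1:ℝ) * dot a a := by
        rw [dot_comm' b a]; linarith
      have hmem := reflC a haΦ b hbΦ (-1) hval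
      have e : b - (-1:ℝ) • a = (1:ℝ) • a + (1:ℝ) • b := by module
      rwa [e] at hmem
    rcases hpm with hp1 | hp2 | hp3
    · -- A2 : p = -1
      have hpB : 2 * dot a b = -dot b b := by
        rw [hp1] at hpe; push_cast at hpe; linarith
      have no2 : ∀ x ∈ Φ, ((2:ℝ) • x ∈ Φ) → False := by
        intro x hx h; rcases hred x hx 2 h with h' | h' <;> norm_num at h'
      have comp : ∀ N : ℕ, ∀ m n : ℕ, m + n = N → ∀ γ ∈ Φ, γ = (m:ℝ) • a + (n:ℝ) • b →
          (m = 1 ∧ n = 0) ∨ (m = 0 ∧ n = 1) ∨ (m = 1 ∧ n = 1) := by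
        intro N
        induction N using Nat.strong_induction_on with
        | _ N ih =>
          intro m n hmn γ hγ hrep
          by_cases hsmall : m + n < 2
          · have h00 : ¬(m = 0 ∧ n = 0) := by
              rintro ⟨rfl, rfl⟩
              apply hΦnz γ hγ
              rw [hrep]; push_cast; simp
            omega
          · push_neg at hsmall
            rcases descent γ hγ m n hrep hsmall with ⟨hm1, hsub⟩ | ⟨hn1, hsub⟩
            · obtain ⟨m', rfl⟩ : ∃ m', m = m' + 1 := ⟨m - 1, by omega⟩
              have hrep' : γ - a = (m':ℝ) • a + (n:ℝ) • b := by rw [hrep]; push_cast; module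
              rcases ih (m' + n) (by omega) m' n rfl (γ - a) hsub hrep' with
                ⟨h1, h2⟩ | ⟨h1, h2⟩ | ⟨h1, h2⟩ <;> subst h1 <;> subst h2
              · exfalso
                apply no2 a haΦ
                have e : γ = (2:ℝ) • a := by rw [hrep]; push_cast; module
                rwa [e] at hγ
              · omega
              · exfalso
                have hda : 2 * dot γ a = (3:ℝ) * dot a a := by
                  rw [hrep, dva, dot_comm' b a]; push_cast; linarith
                have hmem := reflC a haΦ γ hγ 3 hda
                have e : γ - (3:ℝ) • a = (-1:ℝ) • a + (1:ℝ) • b := by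
                  rw [hrep]; push_cast; module
                rw [e] at hmem
                exact nm1 _ _ (by norm_num) (by norm_num) hmem
            · obtain ⟨n', rfl⟩ : ∃ n', n = n' + 1 := ⟨n - 1, by omega⟩
              have hrep' : γ - b = (m:ℝ) • a + (n':ℝ) • b := by rw [hrep]; push_cast; module
              rcases ih (m + n') (by omega) m n' rfl (γ - b) hsub hrep' with
                ⟨h1, h2⟩ | ⟨h1, h2⟩ | ⟨h1, h2⟩ <;> subst h1 <;> subst h2
              · omega
              · exfalso
                apply no2 b hbΦ
                have e : γ = (2:ℝ) • b := by rw [hrep]; push_cast; module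
                rwa [e] at hγ
              · exfalso
                have hdb : 2 * dot γ b = (3:ℝ) * dot b b := by
                  rw [hrep, dva]; push_cast; linarith
                have hmem := reflC b hbΦ γ hγ 3 hdb
                have e : γ - (3:ℝ) • b = (1:ℝ) • a + (-1:ℝ) • b := by
                  rw [hrep]; push_cast; module
                rw [e] at hmem
                exact nm2 _ _ (by norm_num) (by norm_num) hmem
      have finish : ∀ γ, γ ∈ Φ → ∀ g0 g1 : ℕ, γ = (g0:ℝ) • a + (g1:ℝ) • b →
          ∀ c : ℝ, c ≠ 0 → α - β = c • γ →
          ∃ γ', (γ' ∈ Φ ∧ ∃ m n : ℕ, γ' = (m:ℝ) • a + (n:ℝ) • b) ∧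
            ∃ c' : ℝ, c' ≠ 0 ∧ α - β = c' • γ' := by
        intro γ hγ g0 g1 hg c hc he
        exact ⟨γ, ⟨hγ, g0, g1, hg⟩, c, hc, he⟩
      obtain ⟨ma, na, hra⟩ := hαr
      obtain ⟨mb, nb, hrb⟩ := hβr
      rcases comp (ma + na) ma na rfl α hαΦ hra with ⟨h1, h2⟩ | ⟨h1, h2⟩ | ⟨h1, h2⟩ <;>
        subst h1 <;> subst h2 <;>
        rcases comp (mb + nb) mb nb rfl β hβΦ hrb with ⟨h3, h4⟩ | ⟨h3, h4⟩ | ⟨h3, h4⟩ <;>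
        subst h3 <;> subst h4
      · exact absurd ((by rw [hra, hrb] : α = β)) hne
      · exact absurd (Or.inl ⟨by rw [hra]; push_cast; module, by rw [hrb]; push_cast; module⟩) hnotΔ
      · exact finish b hbΦ 0 1 (by push_cast; module) (-1) (by norm_num)
          (by rw [hra, hrb]; push_cast; module)
      · exact absurd (Or.inr ⟨by rw [hra]; push_cast; module, by rw [hrb]; push_cast; module⟩) hnotΔ
      · exact absurd ((by rw [hra, hrb] : α = β)) hne
      · exact finish a haΦ 1 0 (by push_cast; module) (-1) (by norm_num)
          (by rw [hra, hrb]; push_cast; module)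
      · exact finish b hbΦ 0 1 (by push_cast; module) 1 (by norm_num)
          (by rw [hra, hrb]; push_cast; module)
      · exact finish a haΦ 1 0 (by push_cast; module) 1 (by norm_num)
          (by rw [hra, hrb]; push_cast; module)
      · exact absurd ((by rw [hra, hrb] : α = β)) hne
    · -- B2 : p = -2
      have hpB : 2 * dot a b = -2 * dot b b := by
        rw [hp2] at hpe; push_cast at hpe; linarith
      have no2 : ∀ x ∈ Φ, ((2:ℝ) • x ∈ Φ) → False := by
        intro x hx h; rcases hred x hx 2 h with h' | h' <;> norm_num at h'
      have comp : ∀ N : ℕ, ∀ m n : ℕ, m + n = N → ∀ γ ∈ Φ, γ = (m:ℝ) • a + (n:ℝ) • b →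
          (m = 1 ∧ n = 0) ∨ (m = 0 ∧ n = 1) ∨ (m = 1 ∧ n = 1) ∨ (m = 1 ∧ n = 2) := by
        intro N
        induction N using Nat.strong_induction_on with
        | _ N ih =>
          intro m n hmn γ hγ hrep
          by_cases hsmall : m + n < 2
          · have h00 : ¬(m = 0 ∧ n = 0) := by
              rintro ⟨rfl, rfl⟩
              apply hΦnz γ hγ
              rw [hrep]; push_cast; simp
            omega
          · push_neg at hsmall
            rcases descent γ hγ m n hrep hsmall with ⟨hm1, hsub⟩ | ⟨hn1, hsub⟩
            · obtain ⟨m', rfl⟩ : ∃ m', m = m' + 1 := ⟨m - 1, by omega⟩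
              have hrep' : γ - a = (m':ℝ) • a + (n:ℝ) • b := by rw [hrep]; push_cast; module
              rcases ih (m' + n) (by omega) m' n rfl (γ - a) hsub hrep' with
                ⟨h1, h2⟩ | ⟨h1, h2⟩ | ⟨h1, h2⟩ | ⟨h1, h2⟩ <;> subst h1 <;> subst h2
              · exfalso
                apply no2 a haΦ
                have e : γ = (2:ℝ) • a := by rw [hrep]; push_cast; module
                rwa [e] at hγ
              · omega
              · exfalso
                have hda : 2 * dot γ a = (3:ℝ) * dot a a := by
                  rw [hrep, dva, dot_comm' b a]; push_cast; linarith
                have hmem := reflC a haΦ γ hγ 3 hda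
                have e : γ - (3:ℝ) • a = (-1:ℝ) • a + (1:ℝ) • b := by
                  rw [hrep]; push_cast; module
                rw [e] at hmem
                exact nm1 _ _ (by norm_num) (by norm_num) hmem
              · exfalso
                have hda : 2 * dot γ a = (2:ℝ) * dot a a := by
                  rw [hrep, dva, dot_comm' b a]; push_cast; linarith
                have hmem := reflC a haΦ γ hγ 2 hda
                have e : γ - (2:ℝ) • a = (2:ℝ) • b := by
                  rw [hrep]; push_cast; module
                rw [e] at hmem
                exact no2 b hbΦ hmem
            · obtain ⟨n', rfl⟩ : ∃ n', n = n' + 1 := ⟨n - 1, by omega⟩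
              have hrep' : γ - b = (m:ℝ) • a + (n':ℝ) • b := by rw [hrep]; push_cast; module
              rcases ih (m + n') (by omega) m n' rfl (γ - b) hsub hrep' with
                ⟨h1, h2⟩ | ⟨h1, h2⟩ | ⟨h1, h2⟩ | ⟨h1, h2⟩ <;> subst h1 <;> subst h2
              · omega
              · exfalso
                apply no2 b hbΦ
                have e : γ = (2:ℝ) • b := by rw [hrep]; push_cast; module
                rwa [e] at hγ
              · omega
              · exfalso
                have hdb : 2 * dot γ b = (4:ℝ) * dot b b := by
                  rw [hrep, dva]; push_cast; linarith
                have hmem := reflC b hbΦ γ hγ 4 hdb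
                have e : γ - (4:ℝ) • b = (1:ℝ) • a + (-1:ℝ) • b := by
                  rw [hrep]; push_cast; module
                rw [e] at hmem
                exact nm2 _ _ (by norm_num) (by norm_num) hmem
      have finish : ∀ γ, γ ∈ Φ → ∀ g0 g1 : ℕ, γ = (g0:ℝ) • a + (g1:ℝ) • b →
          ∀ c : ℝ, c ≠ 0 → α - β = c • γ →
          ∃ γ', (γ' ∈ Φ ∧ ∃ m n : ℕ, γ' = (m:ℝ) • a + (n:ℝ) • b) ∧
            ∃ c' : ℝ, c' ≠ 0 ∧ α - β = c' • γ' := by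
        intro γ hγ g0 g1 hg c hc he
        exact ⟨γ, ⟨hγ, g0, g1, hg⟩, c, hc, he⟩
      obtain ⟨ma, na, hra⟩ := hαr
      obtain ⟨mb, nb, hrb⟩ := hβr
      rcases comp (ma + na) ma na rfl α hαΦ hra with
        ⟨h1, h2⟩ | ⟨h1, h2⟩ | ⟨h1, h2⟩ | ⟨h1, h2⟩ <;> subst h1 <;> subst h2 <;>
        rcases comp (mb + nb) mb nb rfl β hβΦ hrb with
        ⟨h3, h4⟩ | ⟨h3, h4⟩ | ⟨h3, h4⟩ | ⟨h3, h4⟩ <;> subst h3 <;> subst h4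
      · exact absurd ((by rw [hra, hrb] : α = β)) hne
      · exact absurd (Or.inl ⟨by rw [hra]; push_cast; module, by rw [hrb]; push_cast; module⟩) hnotΔ
      · exact finish b hbΦ 0 1 (by push_cast; module) ((-1)) (by norm_num)
          (by rw [hra, hrb]; push_cast; module)
      · exact finish b hbΦ 0 1 (by push_cast; module) ((-2)) (by norm_num)
          (by rw [hra, hrb]; push_cast; module)
      · exact absurd (Or.inr ⟨by rw [hra]; push_cast; module, by rw [hrb]; push_cast; module⟩) hnotΔ
      · exact absurd ((by rw [hra, hrb] : α = β)) hne
      · exact finish a haΦ 1 0 (by push_cast; module) ((-1)) (by norm_num)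
          (by rw [hra, hrb]; push_cast; module)
      · exact finish ((1:ℝ) • a + (1:ℝ) • b) hu 1 1 (by push_cast; module) ((-1)) (by norm_num)
          (by rw [hra, hrb]; push_cast; module)
      · exact finish b hbΦ 0 1 (by push_cast; module) (1) (by norm_num)
          (by rw [hra, hrb]; push_cast; module)
      · exact finish a haΦ 1 0 (by push_cast; module) (1) (by norm_num)
          (by rw [hra, hrb]; push_cast; module)
      · exact absurd ((by rw [hra, hrb] : α = β)) hne
      · exact finish b hbΦ 0 1 (by push_cast; module) ((-1)) (by norm_num)
          (by rw [hra, hrb]; push_cast; module)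
      · exact finish b hbΦ 0 1 (by push_cast; module) (2) (by norm_num)
          (by rw [hra, hrb]; push_cast; module)
      · exact finish ((1:ℝ) • a + (1:ℝ) • b) hu 1 1 (by push_cast; module) (1) (by norm_num)
          (by rw [hra, hrb]; push_cast; module)
      · exact finish b hbΦ 0 1 (by push_cast; module) (1) (by norm_num)
          (by rw [hra, hrb]; push_cast; module)
      · exact absurd ((by rw [hra, hrb] : α = β)) hne
    · -- G2 : p = -3
      have hpB : 2 * dot a b = -3 * dot b b := by
        rw [hp3] at hpe; push_cast at hpe; linarith
      have no2 : ∀ x ∈ Φ, ((2:ℝ) • x ∈ Φ) → False := by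
        intro x hx h; rcases hred x hx 2 h with h' | h' <;> norm_num at h'
      have no3 : ∀ x ∈ Φ, ((3:ℝ) • x ∈ Φ) → False := by
        intro x hx h; rcases hred x hx 3 h with h' | h' <;> norm_num at h'
      -- v = a + 2b is a root
      have hv : (1:ℝ) • a + (2:ℝ) • b ∈ Φ := by
        have hval : 2 * dot ((1:ℝ) • a + (1:ℝ) • b) b = (-1:ℝ) * dot b b := by
          rw [dva]; linarith
        have hmem := reflC b hbΦ _ hu (-1) hval
        have e : ((1:ℝ) • a + (1:ℝ) • b) - (-1:ℝ) • b = (1:ℝ) • a + (2:ℝ) • b := by module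
        rwa [e] at hmem
      -- t = 2a + 3b is a root
      have ht : (2:ℝ) • a + (3:ℝ) • b ∈ Φ := by
        have hval : 2 * dot a ((1:ℝ) • a + (1:ℝ) • b) =
            (3:ℝ) * dot ((1:ℝ) • a + (1:ℝ) • b) ((1:ℝ) • a + (1:ℝ) • b) := by
          rw [dot_comm' a ((1:ℝ) • a + (1:ℝ) • b), dva, dvv, dot_comm' b a]; linarith
        have hmem := reflC _ hu a haΦ 3 hval
        have e : a - (3:ℝ) • ((1:ℝ) • a + (1:ℝ) • b) = -((2:ℝ) • a + (3:ℝ) • b) := by module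
        rw [e] at hmem
        have := hneg _ hmem
        rwa [neg_neg] at this
      -- w = a + 3b is a root
      have hw : (1:ℝ) • a + (3:ℝ) • b ∈ Φ := by
        have hval : 2 * dot ((2:ℝ) • a + (3:ℝ) • b) a = (1:ℝ) * dot a a := by
          rw [dva, dot_comm' b a]; linarith
        have hmem := reflC a haΦ _ ht 1 hval
        have e : ((2:ℝ) • a + (3:ℝ) • b) - (1:ℝ) • a = (1:ℝ) • a + (3:ℝ) • b := by module
        rwa [e] at hmem
      have comp : ∀ N : ℕ, ∀ m n : ℕ, m + n = N → ∀ γ ∈ Φ, γ = (m:ℝ) • a + (n:ℝ) • b →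
          (m = 1 ∧ n = 0) ∨ (m = 0 ∧ n = 1) ∨ (m = 1 ∧ n = 1) ∨ (m = 1 ∧ n = 2) ∨
          (m = 1 ∧ n = 3) ∨ (m = 2 ∧ n = 3) := by
        intro N
        induction N using Nat.strong_induction_on with
        | _ N ih =>
          intro m n hmn γ hγ hrep
          by_cases hsmall : m + n < 2
          · have h00 : ¬(m = 0 ∧ n = 0) := by
              rintro ⟨rfl, rfl⟩
              apply hΦnz γ hγ
              rw [hrep]; push_cast; simp
            omega
          · push_neg at hsmall
            rcases descent γ hγ m n hrep hsmall with ⟨hm1, hsub⟩ | ⟨hn1, hsub⟩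
            · obtain ⟨m', rfl⟩ : ∃ m', m = m' + 1 := ⟨m - 1, by omega⟩
              have hrep' : γ - a = (m':ℝ) • a + (n:ℝ) • b := by rw [hrep]; push_cast; module
              rcases ih (m' + n) (by omega) m' n rfl (γ - a) hsub hrep' with
                ⟨h1, h2⟩ | ⟨h1, h2⟩ | ⟨h1, h2⟩ | ⟨h1, h2⟩ | ⟨h1, h2⟩ | ⟨h1, h2⟩ <;>
                subst h1 <;> subst h2
              · exfalso
                apply no2 a haΦ
                have e : γ = (2:ℝ) • a := by rw [hrep]; push_cast; module
                rwa [e] at hγ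
              · omega
              · exfalso
                have hda : 2 * dot γ a = (3:ℝ) * dot a a := by
                  rw [hrep, dva, dot_comm' b a]; push_cast; linarith
                have hmem := reflC a haΦ γ hγ 3 hda
                have e : γ - (3:ℝ) • a = (-1:ℝ) • a + (1:ℝ) • b := by
                  rw [hrep]; push_cast; module
                rw [e] at hmem
                exact nm1 _ _ (by norm_num) (by norm_num) hmem
              · exfalso
                have hda : 2 * dot γ a = (2:ℝ) * dot a a := by
                  rw [hrep, dva, dot_comm' b a]; push_cast; linarith
                have hmem := reflC a haΦ γ hγ 2 hda
                have e : γ - (2:ℝ) • a = (2:ℝ) • b := by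
                  rw [hrep]; push_cast; module
                rw [e] at hmem
                exact no2 b hbΦ hmem
              · omega
              · exfalso
                have hda : 2 * dot γ a = (3:ℝ) * dot a a := by
                  rw [hrep, dva, dot_comm' b a]; push_cast; linarith
                have hmem := reflC a haΦ γ hγ 3 hda
                have e : γ - (3:ℝ) • a = (3:ℝ) • b := by
                  rw [hrep]; push_cast; module
                rw [e] at hmem
                exact no3 b hbΦ hmem
            · obtain ⟨n', rfl⟩ : ∃ n', n = n' + 1 := ⟨n - 1, by omega⟩
              have hrep' : γ - b = (m:ℝ) • a + (n':ℝ) • b := by rw [hrep]; push_cast; module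
              rcases ih (m + n') (by omega) m n' rfl (γ - b) hsub hrep' with
                ⟨h1, h2⟩ | ⟨h1, h2⟩ | ⟨h1, h2⟩ | ⟨h1, h2⟩ | ⟨h1, h2⟩ | ⟨h1, h2⟩ <;>
                subst h1 <;> subst h2
              · omega
              · exfalso
                apply no2 b hbΦ
                have e : γ = (2:ℝ) • b := by rw [hrep]; push_cast; module
                rwa [e] at hγ
              · omega
              · omega
              · exfalso
                have hdb : 2 * dot γ b = (5:ℝ) * dot b b := by
                  rw [hrep, dva]; push_cast; linarith
                have hmem := reflC b hbΦ γ hγ 5 hdb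
                have e : γ - (5:ℝ) • b = (1:ℝ) • a + (-1:ℝ) • b := by
                  rw [hrep]; push_cast; module
                rw [e] at hmem
                exact nm2 _ _ (by norm_num) (by norm_num) hmem
              · exfalso
                have hdb : 2 * dot γ b = (2:ℝ) * dot b b := by
                  rw [hrep, dva]; push_cast; linarith
                have hmem := reflC b hbΦ γ hγ 2 hdb
                have e : γ - (2:ℝ) • b = (2:ℝ) • a + (2:ℝ) • b := by
                  rw [hrep]; push_cast; module
                rw [e] at hmem
                have hda2 : 2 * dot ((2:ℝ) • a + (2:ℝ) • b) a = (2:ℝ) * dot a a := by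
                  rw [dva, dot_comm' b a]; linarith
                have hmem2 := reflC a haΦ _ hmem 2 hda2
                have e2 : ((2:ℝ) • a + (2:ℝ) • b) - (2:ℝ) • a = (2:ℝ) • b := by module
                rw [e2] at hmem2
                exact no2 b hbΦ hmem2
      have finish : ∀ γ, γ ∈ Φ → ∀ g0 g1 : ℕ, γ = (g0:ℝ) • a + (g1:ℝ) • b →
          ∀ c : ℝ, c ≠ 0 → α - β = c • γ →
          ∃ γ', (γ' ∈ Φ ∧ ∃ m n : ℕ, γ' = (m:ℝ) • a + (n:ℝ) • b) ∧
            ∃ c' : ℝ, c' ≠ 0 ∧ α - β = c' • γ' := by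
        intro γ hγ g0 g1 hg c hc he
        exact ⟨γ, ⟨hγ, g0, g1, hg⟩, c, hc, he⟩
      obtain ⟨ma, na, hra⟩ := hαr
      obtain ⟨mb, nb, hrb⟩ := hβr
      rcases comp (ma + na) ma na rfl α hαΦ hra with
        ⟨h1, h2⟩ | ⟨h1, h2⟩ | ⟨h1, h2⟩ | ⟨h1, h2⟩ | ⟨h1, h2⟩ | ⟨h1, h2⟩ <;>
        subst h1 <;> subst h2 <;>
        rcases comp (mb + nb) mb nb rfl β hβΦ hrb with
        ⟨h3, h4⟩ | ⟨h3, h4⟩ | ⟨h3, h4⟩ | ⟨h3, h4⟩ | ⟨h3, h4⟩ | ⟨h3, h4⟩ <;>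
        subst h3 <;> subst h4
      · exact absurd ((by rw [hra, hrb] : α = β)) hne
      · exact absurd (Or.inl ⟨by rw [hra]; push_cast; module, by rw [hrb]; push_cast; module⟩) hnotΔ
      · exact finish b hbΦ 0 1 (by push_cast; module) ((-1)) (by norm_num)
          (by rw [hra, hrb]; push_cast; module)
      · exact finish b hbΦ 0 1 (by push_cast; module) ((-2)) (by norm_num)
          (by rw [hra, hrb]; push_cast; module)
      · exact finish b hbΦ 0 1 (by push_cast; module) ((-3)) (by norm_num)
          (by rw [hra, hrb]; push_cast; module)
      · exact finish ((1:ℝ) • a + (3:ℝ) • b) hw 1 3 (by push_cast; module) ((-1)) (by norm_num)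
          (by rw [hra, hrb]; push_cast; module)
      · exact absurd (Or.inr ⟨by rw [hra]; push_cast; module, by rw [hrb]; push_cast; module⟩) hnotΔ
      · exact absurd ((by rw [hra, hrb] : α = β)) hne
      · exact finish a haΦ 1 0 (by push_cast; module) ((-1)) (by norm_num)
          (by rw [hra, hrb]; push_cast; module)
      · exact finish ((1:ℝ) • a + (1:ℝ) • b) hu 1 1 (by push_cast; module) ((-1)) (by norm_num)
          (by rw [hra, hrb]; push_cast; module)
      · exact finish ((1:ℝ) • a + (2:ℝ) • b) hv 1 2 (by push_cast; module) ((-1)) (by norm_num)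
          (by rw [hra, hrb]; push_cast; module)
      · exact finish ((1:ℝ) • a + (1:ℝ) • b) hu 1 1 (by push_cast; module) ((-2)) (by norm_num)
          (by rw [hra, hrb]; push_cast; module)
      · exact finish b hbΦ 0 1 (by push_cast; module) (1) (by norm_num)
          (by rw [hra, hrb]; push_cast; module)
      · exact finish a haΦ 1 0 (by push_cast; module) (1) (by norm_num)
          (by rw [hra, hrb]; push_cast; module)
      · exact absurd ((by rw [hra, hrb] : α = β)) hne
      · exact finish b hbΦ 0 1 (by push_cast; module) ((-1)) (by norm_num)
          (by rw [hra, hrb]; push_cast; module)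
      · exact finish b hbΦ 0 1 (by push_cast; module) ((-2)) (by norm_num)
          (by rw [hra, hrb]; push_cast; module)
      · exact finish ((1:ℝ) • a + (2:ℝ) • b) hv 1 2 (by push_cast; module) ((-1)) (by norm_num)
          (by rw [hra, hrb]; push_cast; module)
      · exact finish b hbΦ 0 1 (by push_cast; module) (2) (by norm_num)
          (by rw [hra, hrb]; push_cast; module)
      · exact finish ((1:ℝ) • a + (1:ℝ) • b) hu 1 1 (by push_cast; module) (1) (by norm_num)
          (by rw [hra, hrb]; push_cast; module)
      · exact finish b hbΦ 0 1 (by push_cast; module) (1) (by norm_num)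
          (by rw [hra, hrb]; push_cast; module)
      · exact absurd ((by rw [hra, hrb] : α = β)) hne
      · exact finish b hbΦ 0 1 (by push_cast; module) ((-1)) (by norm_num)
          (by rw [hra, hrb]; push_cast; module)
      · exact finish ((1:ℝ) • a + (1:ℝ) • b) hu 1 1 (by push_cast; module) ((-1)) (by norm_num)
          (by rw [hra, hrb]; push_cast; module)
      · exact finish b hbΦ 0 1 (by push_cast; module) (3) (by norm_num)
          (by rw [hra, hrb]; push_cast; module)
      · exact finish ((1:ℝ) • a + (2:ℝ) • b) hv 1 2 (by push_cast; module) (1) (by norm_num)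
          (by rw [hra, hrb]; push_cast; module)
      · exact finish b hbΦ 0 1 (by push_cast; module) (2) (by norm_num)
          (by rw [hra, hrb]; push_cast; module)
      · exact finish b hbΦ 0 1 (by push_cast; module) (1) (by norm_num)
          (by rw [hra, hrb]; push_cast; module)
      · exact absurd ((by rw [hra, hrb] : α = β)) hne
      · exact finish a haΦ 1 0 (by push_cast; module) ((-1)) (by norm_num)
          (by rw [hra, hrb]; push_cast; module)
      · exact finish ((1:ℝ) • a + (3:ℝ) • b) hw 1 3 (by push_cast; module) (1) (by norm_num)
          (by rw [hra, hrb]; push_cast; module)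
      · exact finish ((1:ℝ) • a + (1:ℝ) • b) hu 1 1 (by push_cast; module) (2) (by norm_num)
          (by rw [hra, hrb]; push_cast; module)
      · exact finish ((1:ℝ) • a + (2:ℝ) • b) hv 1 2 (by push_cast; module) (1) (by norm_num)
          (by rw [hra, hrb]; push_cast; module)
      · exact finish ((1:ℝ) • a + (1:ℝ) • b) hu 1 1 (by push_cast; module) (1) (by norm_num)
          (by rw [hra, hrb]; push_cast; module)
      · exact finish a haΦ 1 0 (by push_cast; module) (1) (by norm_num)
          (by rw [hra, hrb]; push_cast; module)
      · exact absurd ((by rw [hra, hrb] : α = β)) hne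

/-- **Lemma (Statement 8).** In rank `2`, if `{α, β} ≠ Δ` are distinct positive roots,
then `H_α^k ∩ H_β^k` is contained in some `H_γ^0` (`γ ∈ Φ⁺`), and similarly for
`H_α^{-k} ∩ H_β^{-k}`. -/
theorem rank_two_intersection_nonsimple (Φ : Finset (Fin 2 → ℝ)) (Δ : Fin 2 → Fin 2 → ℝ)
    (hΦ : IsIrredCrystRootSystem Φ) (hΔ : IsSimpleSystem Φ Δ)
    (k : ℕ) (hk : 0 < k)
    (α β : Fin 2 → ℝ) (hα : α ∈ posRoots Φ Δ) (hβ : β ∈ posRoots Φ Δ) (hne : α ≠ β)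
    (hΔαβ : ({α, β} : Set (Fin 2 → ℝ)) ≠ Set.range Δ) :
    (∃ γ ∈ posRoots Φ Δ,
      Hset (emb α - (k : ℤ) • zvec) ∩ Hset (emb β - (k : ℤ) • zvec) ⊆ Hset (emb γ)) ∧
    (∃ γ' ∈ posRoots Φ Δ,
      Hset (emb α + (k : ℤ) • zvec) ∩ Hset (emb β + (k : ℤ) • zvec) ⊆ Hset (emb γ')) := by
  have hind0 : ∀ r s : ℝ, r • Δ 0 + s • Δ 1 = 0 → r = 0 ∧ s = 0 := by
    intro r s h
    have h2 := Fintype.linearIndependent_iff.mp hΔ.indep ![r, s] ?_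
    · exact ⟨by simpa using h2 0, by simpa using h2 1⟩
    · rw [Fin.sum_univ_two]; simpa using h
  have hdec0 : ∀ γ ∈ Φ, (∃ m n : ℕ, γ = (m:ℝ) • Δ 0 + (n:ℝ) • Δ 1) ∨
      (∃ m n : ℕ, -γ = (m:ℝ) • Δ 0 + (n:ℝ) • Δ 1) := by
    intro γ hγ
    rcases hΔ.decomp γ hγ with ⟨c, hc⟩ | ⟨c, hc⟩
    · exact Or.inl ⟨c 0, c 1, by rw [hc, Fin.sum_univ_two]⟩
    · exact Or.inr ⟨c 0, c 1, by rw [hc, Fin.sum_univ_two]⟩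
  have hrange : Set.range Δ = {Δ 0, Δ 1} := by
    ext x
    simp only [Set.mem_range, Set.mem_insert_iff, Set.mem_singleton_iff, Fin.exists_fin_two]
    constructor
    · rintro (h | h) <;> [exact Or.inl h.symm; exact Or.inr h.symm]
    · rintro (h | h) <;> [exact Or.inl h.symm; exact Or.inr h.symm]
  rw [posRoots, Finset.mem_filter] at hα hβ
  obtain ⟨hαΦ, cα, hcα⟩ := hα
  obtain ⟨hβΦ, cβ, hcβ⟩ := hβ
  rcases le_total (dot (Δ 1) (Δ 1)) (dot (Δ 0) (Δ 0)) with hBA | hBA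
  · obtain ⟨γ, ⟨hγΦ, m, n, hγrep⟩, c, hc, heq⟩ :=
      keyLemma Φ (Δ 0) (Δ 1) hΦ.nonzero hΦ.reflect_mem hΦ.crystallographic hΦ.reduced
        hΦ.irreducible (hΔ.mem 0) (hΔ.mem 1) hind0 hdec0 hBA α β hαΦ hβΦ
        ⟨cα 0, cα 1, by rw [hcα, Fin.sum_univ_two]⟩
        ⟨cβ 0, cβ 1, by rw [hcβ, Fin.sum_univ_two]⟩
        hne
        (by
          rintro (⟨rfl, rfl⟩ | ⟨rfl, rfl⟩)
          · exact hΔαβ (by rw [hrange])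
          · exact hΔαβ (by rw [hrange, Set.pair_comm]))
    have hγpos : γ ∈ posRoots Φ Δ := by
      rw [posRoots, Finset.mem_filter]
      refine ⟨hγΦ, ![m, n], ?_⟩
      rw [Fin.sum_univ_two]
      simpa using hγrep
    constructor
    · refine ⟨γ, hγpos, ?_⟩
      simp only [sub_eq_add_neg]
      exact geom α β γ c hc heq _
    · exact ⟨γ, hγpos, geom α β γ c hc heq _⟩
  · obtain ⟨γ, ⟨hγΦ, m, n, hγrep⟩, c, hc, heq⟩ :=
      keyLemma Φ (Δ 1) (Δ 0) hΦ.nonzero hΦ.reflect_mem hΦ.crystallographic hΦ.reduced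
        hΦ.irreducible (hΔ.mem 1) (hΔ.mem 0)
        (fun r s h => by
          have := hind0 s r (by rw [add_comm] at h; exact h)
          exact ⟨this.2, this.1⟩)
        (fun γ hγ => by
          rcases hΔ.decomp γ hγ with ⟨cc, hcc⟩ | ⟨cc, hcc⟩
          · exact Or.inl ⟨cc 1, cc 0, by rw [hcc, Fin.sum_univ_two]; exact add_comm _ _⟩
          · exact Or.inr ⟨cc 1, cc 0, by rw [hcc, Fin.sum_univ_two]; exact add_comm _ _⟩)
        hBA α β hαΦ hβΦ
        ⟨cα 1, cα 0, by rw [hcα, Fin.sum_univ_two]; exact add_comm _ _⟩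
        ⟨cβ 1, cβ 0, by rw [hcβ, Fin.sum_univ_two]; exact add_comm _ _⟩
        hne
        (by
          rintro (⟨rfl, rfl⟩ | ⟨rfl, rfl⟩)
          · exact hΔαβ (by rw [hrange, Set.pair_comm])
          · exact hΔαβ (by rw [hrange]))
    have hγpos : γ ∈ posRoots Φ Δ := by
      rw [posRoots, Finset.mem_filter]
      refine ⟨hγΦ, ![n, m], ?_⟩
      rw [Fin.sum_univ_two]
      simp only [Matrix.cons_val_zero, Matrix.cons_val_one, Matrix.head_cons]
      rw [hγrep]; exact add_comm _ _
    constructor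
    · refine ⟨γ, hγpos, ?_⟩
      simp only [sub_eq_add_neg]
      exact geom α β γ c hc heq _
    · exact ⟨γ, hγpos, geom α β γ c hc heq _⟩

end
end

section
/- Let I ⊆ Φ⁺ be an ideal, and let Y ⊆ ℝ^ℓ be a codimension-2 intersection of hyperplanes H_α (α ∈ Φ⁺). Set Ψ := Φ ∩ Y^⊥, a crystallographic root system of rank 2 (not necessarily irreducible) with positive system Ψ⁺ := Φ⁺ ∩ Y^⊥ and corresponding simple system {γ_1, γ_2}. Then J := I ∩ Ψ⁺ is an ideal of Ψ⁺, i.e. whenever α ∈ J, β ∈ Ψ⁺ and α − β ∈ ℤ_{≥0}γ_1 + ℤ_{≥0}γ_2, then β ∈ J. -/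
open scoped Classical
open MvPolynomial

noncomputable section

/-- **Lemma (Statement 14).** If `I ⊆ Φ⁺` is an ideal and `Y` is a codimension-two
intersection of the hyperplanes `H_α` (`α ∈ Φ⁺`), then, `Ψ⁺ := Φ⁺ ∩ Y^⊥` being the
positive system of the rank-two root system `Φ ∩ Y^⊥` with simple system `{γ₁, γ₂}`,
the set `J := I ∩ Ψ⁺` is an ideal of `Ψ⁺`: whenever `α ∈ J`, `β ∈ Ψ⁺` and
`α - β ∈ ℤ₊γ₁ + ℤ₊γ₂`, we have `β ∈ J`. -/
theorem ideal_restriction_is_ideal {ℓ : ℕ} (Φ : Finset (Fin ℓ → ℝ))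
    (Δ : Fin ℓ → Fin ℓ → ℝ)
    (hΦ : IsIrredCrystRootSystem Φ) (hΔ : IsSimpleSystem Φ Δ)
    (I : Finset (Fin ℓ → ℝ)) (hI : IsIdeal Φ Δ I)
    (Y : Set (Fin ℓ → ℝ)) (B : Finset (Fin ℓ → ℝ)) (hB : B ⊆ posRoots Φ Δ)
    (hY : Y = ⋂ c ∈ B, Hset c)
    (hcodim : Module.finrank ℝ (Submodule.span ℝ Y) + 2 = ℓ)
    (γ₁ γ₂ : Fin ℓ → ℝ)
    (hγ₁ : γ₁ ∈ posRoots Φ Δ) (hγ₁Y : ∀ y ∈ Y, dot γ₁ y = 0)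
    (hγ₂ : γ₂ ∈ posRoots Φ Δ) (hγ₂Y : ∀ y ∈ Y, dot γ₂ y = 0)
    (hγne : γ₁ ≠ γ₂)
    (hsimple : ∀ δ ∈ posRoots Φ Δ, (∀ y ∈ Y, dot δ y = 0) →
        ∃ a b : ℕ, δ = (a : ℝ) • γ₁ + (b : ℝ) • γ₂) :
    ∀ α ∈ I, (∀ y ∈ Y, dot α y = 0) →
      ∀ β ∈ posRoots Φ Δ, (∀ y ∈ Y, dot β y = 0) →
        (∃ a b : ℕ, α - β = (a : ℝ) • γ₁ + (b : ℝ) • γ₂) →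
          β ∈ I := by
  intro α hα _ β hβ _ hab
  obtain ⟨a, b, hab⟩ := hab
  obtain ⟨c₁, hc₁⟩ := (Finset.mem_filter.mp hγ₁).2
  obtain ⟨c₂, hc₂⟩ := (Finset.mem_filter.mp hγ₂).2
  refine hI.2 α hα β hβ ⟨fun i => a * c₁ i + b * c₂ i, ?_⟩
  rw [hab, hc₁, hc₂, Finset.smul_sum, Finset.smul_sum, ← Finset.sum_add_distrib]
  refine Finset.sum_congr rfl fun i _ => ?_
  push_cast
  rw [smul_smul, smul_smul, ← add_smul]

end
end
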